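/- arXiv:1604.05645 — 2 statements merged into one kernel-verified Lean document; each statement's English description precedes it below -/
import Mathlib

section
/- Let (E, μ) be a σ-finite measure space, N ≥ 1, and let F_{jk} : E → ℂ for j, k ∈ {1,…,N} be square integrable with respect to μ, such that for each j, ∫_E F_{jk} · conj(F_{jl}) dμ = 0 whenever k ≠ l. Then perm(∫_E |F_{jk}|² dμ)_{j,k=1}^N = ∫_{E^N} |det(F_{jk}(x_j))_{j,k=1}^N|² dμ^{⊗N}(x₁,…,x_N). -/
open MeasureTheory
open scoped ENNReal

noncomputable section

/-- The permanent of a matrix `A`, `perm A = ∑_σ ∏_j A j (σ j)`. -/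
def perm {ι : Type*} [Fintype ι] [DecidableEq ι] (A : ι → ι → ℝ) : ℝ :=
  ∑ σ : Equiv.Perm ι, ∏ j, A j (σ j)

private lemma integral_complex_ofReal' {X : Type*} [MeasurableSpace X] {ν : MeasureTheory.Measure X} (f : X → ℝ) :
    ∫ x, ((f x : ℝ) : ℂ) ∂ν = ((∫ x, f x ∂ν : ℝ) : ℂ) :=
  integral_ofReal

private lemma mul_conj_integrable {E : Type*} [MeasurableSpace E] (μ : Measure E)
    (f g : E → ℂ) (hf : MemLp f 2 μ) (hg : MemLp g 2 μ) :
    Integrable (fun t => f t * (starRingEnd ℂ) (g t)) μ := by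
  have hgc : MemLp (fun t => (starRingEnd ℂ) (g t)) 2 μ :=
    Complex.conjLIE.lipschitz.comp_memLp (map_zero _) hg
  have := (hgc.smul hf :
    MemLp (f • fun t => (starRingEnd ℂ) (g t)) 1 μ)
  rw [memLp_one_iff_integrable] at this
  exact this

/-- For square-integrable functions `F_{jk}` that are rowwise orthogonal,
`perm(∫ |F_{jk}|² dμ) = ∫_{E^N} |det(F_{jk}(x_j))|² dμ^{⊗N}`. -/
theorem statement13 {E : Type*} [MeasurableSpace E] (μ : Measure E) [SigmaFinite μ]
    (N : ℕ) (hN : 1 ≤ N) (F : Fin N → Fin N → E → ℂ)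
    (hmeas : ∀ j k, Measurable (F j k))
    (hL2 : ∀ j k, MemLp (F j k) 2 μ)
    (horth : ∀ j k l, k ≠ l → ∫ t, F j k t * (starRingEnd ℂ) (F j l t) ∂μ = 0) :
    perm (fun j k => ∫ t, ‖F j k t‖ ^ 2 ∂μ) =
      ∫ x : Fin N → E, ‖Matrix.det (Matrix.of fun j k => F j k (x j))‖ ^ 2
        ∂(Measure.pi fun _ : Fin N => μ) := by
  classical
  letI : MeasureSpace E := ⟨μ⟩
  letI : SigmaFinite (volume : Measure E) := ‹SigmaFinite μ›
  have hvol : (Measure.pi fun _ : Fin N => μ) = (volume : Measure (Fin N → E)) :=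
    (volume_pi).symm
  -- integrability of each product term
  have hint : ∀ j k l, Integrable (fun t => F j k t * (starRingEnd ℂ) (F j l t)) μ :=
    fun j k l => mul_conj_integrable μ _ _ (hL2 j k) (hL2 j l)
  have hprodint : ∀ σ τ : Equiv.Perm (Fin N),
      Integrable (fun x : Fin N → E =>
        ∏ j, (F j (σ j) (x j) * (starRingEnd ℂ) (F j (τ j) (x j)))) volume :=
    fun σ τ => Integrable.fintype_prod (f := fun j t =>
      F j (σ j) t * (starRingEnd ℂ) (F j (τ j) t)) (fun j => hint j (σ j) (τ j))
  -- pointwise identity for |det|^2 as a complex number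
  have hdet : ∀ x : Fin N → E,
      ((‖Matrix.det (Matrix.of fun j k => F j k (x j))‖ ^ 2 : ℝ) : ℂ) =
        ∑ σ : Equiv.Perm (Fin N), ∑ τ : Equiv.Perm (Fin N),
          (((Equiv.Perm.sign σ : ℤ) : ℂ) * ((Equiv.Perm.sign τ : ℤ) : ℂ)) *
            ∏ j, (F j (σ j) (x j) * (starRingEnd ℂ) (F j (τ j) (x j))) := by
    intro x
    set M : Matrix (Fin N) (Fin N) ℂ := Matrix.of fun j k => F j k (x j)
    have hdet' : M.det = ∑ σ : Equiv.Perm (Fin N),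
        ((Equiv.Perm.sign σ : ℤ) : ℂ) * ∏ j, F j (σ j) (x j) := by
      rw [← Matrix.det_transpose, Matrix.det_apply']
      rfl
    have h1 : ((‖M.det‖ ^ 2 : ℝ) : ℂ) = M.det * (starRingEnd ℂ) M.det := by
      rw [Complex.mul_conj]
      norm_cast
      rw [← Complex.sq_norm]
    rw [h1, hdet', map_sum, Finset.sum_mul_sum]
    refine Finset.sum_congr rfl fun σ _ => Finset.sum_congr rfl fun τ _ => ?_
    rw [map_mul, map_prod]
    have : ((starRingEnd ℂ) ((Equiv.Perm.sign τ : ℤ) : ℂ)) = ((Equiv.Perm.sign τ : ℤ) : ℂ) := by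
      simp
    rw [this, Finset.prod_mul_distrib]
    ring
  -- the complex-valued integral computation
  have key : ((∫ x : Fin N → E, ‖Matrix.det (Matrix.of fun j k => F j k (x j))‖ ^ 2
        ∂(Measure.pi fun _ : Fin N => μ) : ℝ) : ℂ) =
      ∑ σ : Equiv.Perm (Fin N), ∏ j, ((∫ t, ‖F j (σ j) t‖ ^ 2 ∂μ : ℝ) : ℂ) := by
    rw [hvol, ← integral_complex_ofReal']
    calc ∫ x : Fin N → E,
          ((‖Matrix.det (Matrix.of fun j k => F j k (x j))‖ ^ 2 : ℝ) : ℂ)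
        = ∫ x : Fin N → E, ∑ σ : Equiv.Perm (Fin N), ∑ τ : Equiv.Perm (Fin N),
            (((Equiv.Perm.sign σ : ℤ) : ℂ) * ((Equiv.Perm.sign τ : ℤ) : ℂ)) *
              ∏ j, (F j (σ j) (x j) * (starRingEnd ℂ) (F j (τ j) (x j))) := by
          exact integral_congr_ae (Filter.Eventually.of_forall fun x => hdet x)
      _ = ∑ σ : Equiv.Perm (Fin N), ∑ τ : Equiv.Perm (Fin N),
            (((Equiv.Perm.sign σ : ℤ) : ℂ) * ((Equiv.Perm.sign τ : ℤ) : ℂ)) *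
              ∫ x : Fin N → E,
                ∏ j, (F j (σ j) (x j) * (starRingEnd ℂ) (F j (τ j) (x j))) := by
          rw [integral_finset_sum _ (fun σ _ => integrable_finset_sum _
            (fun τ _ => ((hprodint σ τ).const_mul _)))]
          exact Finset.sum_congr rfl fun σ _ => by
            rw [integral_finset_sum _ (fun τ _ => ((hprodint σ τ).const_mul _))]
            exact Finset.sum_congr rfl fun τ _ => integral_const_mul _ _
      _ = ∑ σ : Equiv.Perm (Fin N), ∑ τ : Equiv.Perm (Fin N),
            (((Equiv.Perm.sign σ : ℤ) : ℂ) * ((Equiv.Perm.sign τ : ℤ) : ℂ)) *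
              ∏ j, ∫ t, F j (σ j) t * (starRingEnd ℂ) (F j (τ j) t) ∂μ := by
          refine Finset.sum_congr rfl fun σ _ => Finset.sum_congr rfl fun τ _ => ?_
          rw [← hvol, integral_fintype_prod_eq_prod
            (f := fun j t => F j (σ j) t * (starRingEnd ℂ) (F j (τ j) t))]
      _ = ∑ σ : Equiv.Perm (Fin N), ∏ j, ((∫ t, ‖F j (σ j) t‖ ^ 2 ∂μ : ℝ) : ℂ) := by
          refine Finset.sum_congr rfl fun σ _ => ?_
          rw [Finset.sum_eq_single σ]
          · have hsq : (((Equiv.Perm.sign σ : ℤ) : ℂ) * ((Equiv.Perm.sign σ : ℤ) : ℂ)) = 1 := by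
              rcases Int.units_eq_one_or (Equiv.Perm.sign σ) with h | h <;> simp [h]
            rw [hsq, one_mul]
            refine Finset.prod_congr rfl fun j _ => ?_
            rw [← integral_complex_ofReal']
            refine integral_congr_ae (Filter.Eventually.of_forall fun t => ?_)
            simp [Complex.mul_conj, Complex.normSq_eq_norm_sq]
          · intro τ _ hτ
            have : ∃ j, σ j ≠ τ j := by
              by_contra h
              push_neg at h
              exact hτ (Equiv.ext h).symm
            obtain ⟨j, hj⟩ := this
            rw [Finset.prod_eq_zero (Finset.mem_univ j) (horth j (σ j) (τ j) hj), mul_zero]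
          · intro h
            exact absurd (Finset.mem_univ σ) h
  -- conclude
  apply Complex.ofReal_injective
  rw [key, perm]
  push_cast
  rfl
end
end

section
/- Let N ≥ 1 and let (a_{jk})_{j,k=1}^N be an N×N matrix of non-negative real numbers. Then perm(a_{jk}) = (2π)^{−N} ∫_{[0,2π]^N} |det(√(a_{jk}) · e^{i·k·x_j})_{j,k=1}^N|² dx₁ ⋯ dx_N. -/
open MeasureTheory Real
open scoped ENNReal

noncomputable section

private lemma aux_exp_integral (m : ℤ) :
    ∫ t in Set.Icc (0:ℝ) (2*π), Complex.exp ((m:ℂ) * t * Complex.I) =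
      if m = 0 then ((2*π : ℝ) : ℂ) else 0 := by
  rw [integral_Icc_eq_integral_Ioc, ← intervalIntegral.integral_of_le (by positivity)]
  by_cases hm : m = 0
  · simp [hm]
  · have hc : (m:ℂ) * Complex.I ≠ 0 := by
      simp [Complex.I_ne_zero, hm, Int.cast_injective.eq_iff]
    simp_rw [show ∀ x:ℝ, (m:ℂ) * x * Complex.I = ((m:ℂ)*Complex.I) * x from fun x => by ring]
    rw [integral_exp_mul_complex hc,
      show ((m:ℂ)*Complex.I) * ((2*π:ℝ):ℂ) = m * (2*π*Complex.I) by push_cast; ring,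
      Complex.exp_int_mul_two_pi_mul_I]
    simp [hm]

private lemma aux_pi_prod {N : ℕ} (S : Set ℝ) (hS : MeasurableSet S) (g : Fin N → ℝ → ℂ) :
    ∫ x : Fin N → ℝ in Set.univ.pi (fun _ => S), ∏ j, g j (x j) = ∏ j, ∫ t in S, g j t := by
  rw [← integral_indicator (MeasurableSet.univ_pi fun _ => hS)]
  have h : Set.indicator (Set.univ.pi fun _ : Fin N => S) (fun x => ∏ j, g j (x j)) =
      fun x => ∏ j, Set.indicator S (g j) (x j) := by
    ext x
    by_cases hx : x ∈ Set.univ.pi fun _ : Fin N => S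
    · rw [Set.indicator_of_mem hx]
      exact Finset.prod_congr rfl fun j _ => (Set.indicator_of_mem (hx j trivial) _).symm
    · rw [Set.indicator_of_notMem hx]
      obtain ⟨j, hj⟩ : ∃ j, x j ∉ S := by simpa [Set.mem_pi] using hx
      exact (Finset.prod_eq_zero (Finset.mem_univ j) (by simp [Set.indicator_of_notMem hj])).symm
  rw [h, volume_pi, integral_fintype_prod_eq_prod (f := fun j t => Set.indicator S (g j) t)]
  exact Finset.prod_congr rfl fun j _ => integral_indicator hS

/-- For a matrix of nonnegative reals,
`perm(a_{jk}) = (2π)^{-N} ∫_{[0,2π]^N} |det(√(a_{jk}) e^{i k x_j})|² dx`. -/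
theorem statement15 (N : ℕ) (hN : 1 ≤ N) (a : Fin N → Fin N → ℝ)
    (ha : ∀ j k, 0 ≤ a j k) :
    perm a =
      ((2 * π) ^ N)⁻¹ *
        ∫ x : Fin N → ℝ in Set.univ.pi fun _ : Fin N => Set.Icc (0:ℝ) (2 * π),
          ‖Matrix.det (Matrix.of fun j k =>
            (Real.sqrt (a j k) : ℂ) *
              Complex.exp (Complex.I * (((k : ℕ) + 1 : ℕ) : ℂ) * (x j : ℂ)))‖ ^ 2 := by
  classical
  have hπ : (0:ℝ) < 2 * π := by positivity
  set P : Set (Fin N → ℝ) := Set.univ.pi fun _ : Fin N => Set.Icc (0:ℝ) (2*π) with hP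
  set f : (Fin N → ℝ) → ℂ := fun x => Matrix.det (Matrix.of fun j k =>
      (Real.sqrt (a j k) : ℂ) *
        Complex.exp (Complex.I * (((k:ℕ)+1 : ℕ) : ℂ) * (x j : ℂ))) with hf
  set g : Equiv.Perm (Fin N) → Equiv.Perm (Fin N) → Fin N → ℝ → ℂ :=
    fun σ τ j t => ((Real.sqrt (a j (σ j)) * Real.sqrt (a j (τ j)) : ℝ) : ℂ) *
      Complex.exp (((((σ j : ℤ) - (τ j : ℤ)) : ℤ) : ℂ) * t * Complex.I) with hg
  -- pointwise expansion of |det|² as double sum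
  have hpt : ∀ x : Fin N → ℝ, f x * (starRingEnd ℂ) (f x) =
      ∑ σ : Equiv.Perm (Fin N), ∑ τ : Equiv.Perm (Fin N),
        (((Equiv.Perm.sign σ : ℤ) : ℂ) * ((Equiv.Perm.sign τ : ℤ) : ℂ)) *
          ∏ j, g σ τ j (x j) := by
    intro x
    have hdet : f x = ∑ σ : Equiv.Perm (Fin N), ((Equiv.Perm.sign σ : ℤ) : ℂ) *
        ∏ j, (Real.sqrt (a j (σ j)) : ℂ) *
          Complex.exp (Complex.I * (((σ j : ℕ) + 1 : ℕ) : ℂ) * (x j : ℂ)) := by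
      simp only [hf]
      rw [← Matrix.det_transpose, Matrix.det_apply']
      simp [Matrix.transpose_apply]
    rw [hdet, map_sum, Finset.sum_mul_sum]
    refine Finset.sum_congr rfl fun σ _ => Finset.sum_congr rfl fun τ _ => ?_
    simp only [map_mul, map_prod, map_intCast]
    rw [mul_mul_mul_comm, ← Finset.prod_mul_distrib]
    congr 1
    refine Finset.prod_congr rfl fun j _ => ?_
    rw [Complex.conj_ofReal, ← Complex.exp_conj,
      show (starRingEnd ℂ) (Complex.I * (((τ j : ℕ) + 1 : ℕ) : ℂ) * ((x j : ℝ) : ℂ)) =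
        -(Complex.I * (((τ j : ℕ) + 1 : ℕ) : ℂ) * ((x j : ℝ) : ℂ)) by
          simp [map_mul, Complex.conj_I, Complex.conj_ofReal]]
    rw [hg, mul_mul_mul_comm, ← Complex.ofReal_mul, ← Complex.exp_add]
    congr 2
    push_cast
    ring
  -- integrability of each term
  have hcomp : IsCompact P := isCompact_univ_pi fun _ => isCompact_Icc
  have hInt : ∀ σ τ : Equiv.Perm (Fin N),
      IntegrableOn (fun x : Fin N → ℝ =>
        (((Equiv.Perm.sign σ : ℤ) : ℂ) * ((Equiv.Perm.sign τ : ℤ) : ℂ)) *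
          ∏ j, g σ τ j (x j)) P volume := by
    intro σ τ
    refine (ContinuousOn.integrableOn_compact hcomp ?_)
    refine Continuous.continuousOn ?_
    refine continuous_const.mul (continuous_finset_prod _ fun j _ => ?_)
    simp only [hg]
    exact continuous_const.mul (Complex.continuous_exp.comp (by continuity))
  -- compute the complex integral
  have hJ : ∫ x in P, f x * (starRingEnd ℂ) (f x) = (((2*π)^N * perm a : ℝ) : ℂ) := by
    simp only [hpt]
    rw [integral_finset_sum _ fun σ _ => integrable_finset_sum _ fun τ _ => hInt σ τ]
    have hterm : ∀ σ τ : Equiv.Perm (Fin N),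
        ∫ x in P, (((Equiv.Perm.sign σ : ℤ) : ℂ) * ((Equiv.Perm.sign τ : ℤ) : ℂ)) *
          ∏ j, g σ τ j (x j) =
        (((Equiv.Perm.sign σ : ℤ) : ℂ) * ((Equiv.Perm.sign τ : ℤ) : ℂ)) *
          ∏ j, ((Real.sqrt (a j (σ j)) * Real.sqrt (a j (τ j)) : ℝ) : ℂ) *
            (if ((σ j : ℤ) - (τ j : ℤ)) = 0 then ((2*π : ℝ) : ℂ) else 0) := by
      intro σ τ
      rw [integral_const_mul, hP, aux_pi_prod _ measurableSet_Icc]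
      congr 1
      refine Finset.prod_congr rfl fun j _ => ?_
      simp only [hg]
      rw [integral_const_mul, aux_exp_integral]
    calc ∑ σ : Equiv.Perm (Fin N), ∫ x in P, ∑ τ : Equiv.Perm (Fin N),
          (((Equiv.Perm.sign σ : ℤ) : ℂ) * ((Equiv.Perm.sign τ : ℤ) : ℂ)) * ∏ j, g σ τ j (x j)
        = ∑ σ : Equiv.Perm (Fin N), ∑ τ : Equiv.Perm (Fin N),
            (((Equiv.Perm.sign σ : ℤ) : ℂ) * ((Equiv.Perm.sign τ : ℤ) : ℂ)) *
              ∏ j, ((Real.sqrt (a j (σ j)) * Real.sqrt (a j (τ j)) : ℝ) : ℂ) *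
                (if ((σ j : ℤ) - (τ j : ℤ)) = 0 then ((2*π : ℝ) : ℂ) else 0) := by
          refine Finset.sum_congr rfl fun σ _ => ?_
          rw [integral_finset_sum _ fun τ _ => hInt σ τ]
          exact Finset.sum_congr rfl fun τ _ => hterm σ τ
      _ = ∑ σ : Equiv.Perm (Fin N), ((2*π : ℝ) : ℂ)^N * ∏ j, ((a j (σ j) : ℝ) : ℂ) := by
          refine Finset.sum_congr rfl fun σ _ => ?_
          rw [Finset.sum_eq_single σ]
          · have hsgn : ((Equiv.Perm.sign σ : ℤ) : ℂ) * ((Equiv.Perm.sign σ : ℤ) : ℂ) = 1 := by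
              rw [← Int.cast_mul, ← Units.val_mul, Int.units_mul_self]; simp
            have hone : ∀ j : Fin N, ((Real.sqrt (a j (σ j)) * Real.sqrt (a j (σ j)) : ℝ) : ℂ) *
                (if ((σ j : ℤ) - (σ j : ℤ)) = 0 then ((2*π : ℝ) : ℂ) else 0) =
                ((2*π : ℝ) : ℂ) * ((a j (σ j) : ℝ) : ℂ) := by
              intro j
              rw [sub_self, if_pos rfl, Real.mul_self_sqrt (ha j (σ j)), mul_comm]
            rw [hsgn, one_mul]
            simp only [hone]
            rw [Finset.prod_mul_distrib, Finset.prod_const, Finset.card_univ, Fintype.card_fin]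
          · intro τ _ hτ
            obtain ⟨j, hj⟩ : ∃ j, τ j ≠ σ j := by
              by_contra hc
              push_neg at hc
              exact hτ (Equiv.ext hc)
            have hd : ((σ j : ℤ) - (τ j : ℤ)) ≠ 0 := by
              have : (τ j : ℕ) ≠ (σ j : ℕ) := fun h => hj (Fin.ext h)
              omega
            rw [Finset.prod_eq_zero (Finset.mem_univ j) (by rw [if_neg hd, mul_zero]), mul_zero]
          · intro h
            exact absurd (Finset.mem_univ σ) h
      _ = (((2*π)^N * perm a : ℝ) : ℂ) := by
          rw [← Finset.mul_sum]
          push_cast [perm]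
          ring
  -- pass from real to complex integral
  have h1 : ∀ x : Fin N → ℝ, ((‖f x‖^2 : ℝ) : ℂ) = f x * (starRingEnd ℂ) (f x) := by
    intro x
    rw [Complex.mul_conj]
    norm_cast
    rw [Complex.normSq_eq_norm_sq]
  have hIntF : Integrable (fun x => f x * (starRingEnd ℂ) (f x)) (volume.restrict P) := by
    rw [show (fun x => f x * (starRingEnd ℂ) (f x)) =
        fun x => ∑ σ : Equiv.Perm (Fin N), ∑ τ : Equiv.Perm (Fin N),
          (((Equiv.Perm.sign σ : ℤ) : ℂ) * ((Equiv.Perm.sign τ : ℤ) : ℂ)) *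
            ∏ j, g σ τ j (x j) from funext hpt]
    exact integrable_finset_sum _ fun σ _ => integrable_finset_sum _ fun τ _ => hInt σ τ
  have hre : ∀ x : Fin N → ℝ, ‖f x‖^2 = (f x * (starRingEnd ℂ) (f x)).re := by
    intro x
    simp [Complex.mul_conj, Complex.normSq_eq_norm_sq, ← Complex.ofReal_pow]
  have h3 : ∫ x in P, ‖f x‖^2 = (2*π)^N * perm a := by
    have h5 := integral_re hIntF
    rw [hJ] at h5
    simp only [RCLike.re_to_complex, Complex.ofReal_re] at h5
    calc ∫ x in P, ‖f x‖^2 = ∫ x in P, (f x * (starRingEnd ℂ) (f x)).re := by simp_rw [hre]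
      _ = (2*π)^N * perm a := h5
  show perm a = ((2 * π) ^ N)⁻¹ * ∫ x in P, ‖f x‖^2
  rw [h3, inv_mul_cancel_left₀ (by positivity)]
end
end
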